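/- Let h : ℝ → ℝ be defined by h(x) = 2x if x < 1 and h(x) = (2/3)x if x ≥ 1. Then h maps the interval [2/3, 2) into itself, and for every x ∈ [2/3, 2) the forward orbit {h^[n](x) : n ∈ ℕ} is dense in [2/3, 2), i.e., the interval [2/3, 2) is contained in the closure of the orbit. -/

import Mathlib

open Real Set

noncomputable def alph : ℝ := Real.logb 3 2

lemma alph_pos : 0 < alph := Real.logb_pos (by norm_num) (by norm_num)

lemma alph_lt_one : alph < 1 := by
  have : Real.logb 3 2 < Real.logb 3 3 :=
    Real.logb_lt_logb (by norm_num) (by norm_num) (by norm_num)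
  simpa [alph, Real.logb_self_eq_one] using this

/-- irrationality: no positive multiple of `alph` is an integer. -/
lemma alph_irr (N : ℕ) (hN : 0 < N) (K : ℤ) : (N : ℝ) * alph ≠ K := by
  intro hEq
  have h3 : Real.log 3 ≠ 0 := by
    have := Real.log_pos (by norm_num : (1:ℝ) < 3); linarith
  have hlog : (N : ℝ) * Real.log 2 = (K : ℝ) * Real.log 3 := by
    have : (N : ℝ) * (Real.log 2 / Real.log 3) = K := hEq
    field_simp at this
    linarith [this]
  have h2N : Real.log ((2:ℝ) ^ N) = Real.log ((3:ℝ) ^ K) := by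
    rw [Real.log_pow, Real.log_zpow]; push_cast; linarith
  have hpow : (2:ℝ) ^ N = (3:ℝ) ^ K := by
    have h1 : (0:ℝ) < 2 ^ N := by positivity
    have h2 : (0:ℝ) < (3:ℝ) ^ K := zpow_pos (by norm_num) K
    calc (2:ℝ)^N = Real.exp (Real.log ((2:ℝ)^N)) := (Real.exp_log h1).symm
      _ = Real.exp (Real.log ((3:ℝ)^K)) := by rw [h2N]
      _ = (3:ℝ)^K := Real.exp_log h2
  rcases le_or_gt K 0 with hK | hK
  · have h1 : (3:ℝ) ^ K ≤ 1 := zpow_le_one_of_nonpos₀ (by norm_num) hK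
    have h2 : (2:ℝ) ≤ (2:ℝ) ^ N := by
      calc (2:ℝ) = 2 ^ 1 := (pow_one 2).symm
        _ ≤ 2 ^ N := pow_le_pow_right₀ (by norm_num) hN
    linarith
  · set m := K.toNat with hm
    have hKm : (K : ℤ) = (m : ℤ) := (Int.toNat_of_nonneg hK.le).symm
    have hpow' : (2:ℝ) ^ N = (3:ℝ) ^ m := by
      rw [hpow, hKm, zpow_natCast]
    have hnat : (2:ℕ) ^ N = 3 ^ m := by
      have := hpow'
      exact_mod_cast this
    have hmod : (2:ℕ) ^ N % 2 = 3 ^ m % 2 := by rw [hnat]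
    have h1 : (2:ℕ) ^ N % 2 = 0 := by
      have : 2 ∣ 2 ^ N := dvd_pow_self 2 hN.ne'
      omega
    have h2 : (3:ℕ) ^ m % 2 = 1 := by
      rw [Nat.pow_mod]; norm_num
    omega


lemma small_step {ε : ℝ} (hε : 0 < ε) :
    ∃ N : ℕ, 0 < N ∧ ∃ K : ℤ, ((N:ℝ) * alph - K ≠ 0 ∧ |(N:ℝ) * alph - K| < ε) := by
  obtain ⟨M, hM⟩ := exists_nat_gt (1/ε)
  have hM0 : 0 < M := by
    have : (0:ℝ) < M := lt_trans (by positivity) hM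
    exact_mod_cast this
  -- pigeonhole on f n = ⌊fract(n α) * M⌋₊
  set f : ℕ → ℕ := fun n => ⌊Int.fract ((n:ℝ) * alph) * M⌋₊ with hf
  have hmaps : ∀ n ∈ Finset.range (M+1), f n ∈ Finset.range M := by
    intro n _
    simp only [Finset.mem_range, hf]
    have h0 : (0:ℝ) ≤ Int.fract ((n:ℝ) * alph) := Int.fract_nonneg _
    have h1 : Int.fract ((n:ℝ) * alph) < 1 := Int.fract_lt_one _
    have : Int.fract ((n:ℝ) * alph) * M < M := by
      nlinarith [ (by exact_mod_cast hM0 : (0:ℝ) < M) ]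
    rw [Nat.floor_lt (by positivity)]
    exact this
  obtain ⟨m, hm, n, hn, hmn, hfeq⟩ :=
    Finset.exists_ne_map_eq_of_card_lt_of_maps_to
      (by simp) hmaps
  -- wlog m < n
  wlog hlt : m < n generalizing m n
  · exact this n hn m hm hmn.symm hfeq.symm (by omega)
  have key : |Int.fract ((n:ℝ) * alph) - Int.fract ((m:ℝ) * alph)| < ε := by
    set a := Int.fract ((m:ℝ) * alph) * M
    set b := Int.fract ((n:ℝ) * alph) * M
    have hMpos : (0:ℝ) < M := by exact_mod_cast hM0
    have ha0 : (0:ℝ) ≤ a := mul_nonneg (Int.fract_nonneg _) hMpos.le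
    have hb0 : (0:ℝ) ≤ b := mul_nonneg (Int.fract_nonneg _) hMpos.le
    have h1 : a < ⌊a⌋₊ + 1 := Nat.lt_floor_add_one a
    have h2 : b < ⌊b⌋₊ + 1 := Nat.lt_floor_add_one b
    have h3 : (⌊a⌋₊ : ℝ) ≤ a := Nat.floor_le ha0
    have h4 : (⌊b⌋₊ : ℝ) ≤ b := Nat.floor_le hb0
    have hab : (⌊a⌋₊ : ℝ) = (⌊b⌋₊ : ℝ) := by exact_mod_cast congrArg Nat.cast hfeq
    have habs : |a - b| < 1 := by rw [abs_lt]; constructor <;> nlinarith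
    have hd : |Int.fract ((n:ℝ) * alph) - Int.fract ((m:ℝ) * alph)| * M < 1 := by
      have : (Int.fract ((n:ℝ) * alph) - Int.fract ((m:ℝ) * alph)) * M = b - a := by
        simp [a, b]; ring
      rw [← abs_of_pos hMpos, ← abs_mul, this, abs_sub_comm]
      exact habs
    have h1ε : 1 < ε * M := by
      rw [div_lt_iff₀ hε] at hM
      linarith
    exact lt_of_mul_lt_mul_right (hd.trans h1ε) hMpos.le
  -- now extract N and K
  refine ⟨n - m, by omega, ⌊(n:ℝ) * alph⌋ - ⌊(m:ℝ) * alph⌋, ?_, ?_⟩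
  · have hid : ((n - m : ℕ) : ℝ) * alph - ((⌊(n:ℝ) * alph⌋ - ⌊(m:ℝ) * alph⌋ : ℤ) : ℝ)
        = Int.fract ((n:ℝ) * alph) - Int.fract ((m:ℝ) * alph) := by
      rw [Nat.cast_sub hlt.le, Int.fract, Int.fract]
      push_cast
      ring
    rw [hid]
    have hd2 : ((n - m : ℕ) : ℝ) * alph ≠ ((⌊(n:ℝ) * alph⌋ - ⌊(m:ℝ) * alph⌋ : ℤ) : ℝ) :=
      alph_irr (n - m) (by omega) _
    intro hzero
    exact hd2 (by linarith)
  · have hid : ((n - m : ℕ) : ℝ) * alph - ((⌊(n:ℝ) * alph⌋ - ⌊(m:ℝ) * alph⌋ : ℤ) : ℝ)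
        = Int.fract ((n:ℝ) * alph) - Int.fract ((m:ℝ) * alph) := by
      rw [Nat.cast_sub hlt.le, Int.fract, Int.fract]
      push_cast
      ring
    rw [hid]
    exact key

lemma orbit_close (t c : ℝ) {ε : ℝ} (hε : 0 < ε) :
    ∃ n : ℕ, ∃ J : ℤ, |t + (n:ℝ) * alph - (J:ℝ) - c| < ε := by
  obtain ⟨N, hN, K, hne, hlt⟩ := small_step hε
  set β := (N:ℝ) * alph - (K:ℝ) with hβ
  rcases hne.lt_or_gt with hβneg | hβpos
  · -- β < 0
    set γ := -β with hγ
    have hγpos : 0 < γ := by simp [hγ]; linarith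
    have hγε : γ < ε := by
      have : |β| = γ := abs_of_neg hβneg
      linarith [this ▸ hlt]
    set L := ⌊t - c⌋ with hL
    have hc' : c + (L:ℝ) ≤ t := by
      have := Int.floor_le (t - c)
      linarith
    set c' := c + (L:ℝ) with hc'def
    set p := ⌈(t - c') / γ⌉₊ with hp
    have hnn : 0 ≤ (t - c') / γ := div_nonneg (by linarith) hγpos.le
    have h1 : (t - c') / γ ≤ (p:ℝ) := Nat.le_ceil _
    have h2 : (p:ℝ) < (t - c') / γ + 1 := Nat.ceil_lt_add_one hnn
    have hub : t - (p:ℝ) * γ ≤ c' := by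
      rw [div_le_iff₀ hγpos] at h1; linarith
    have hlb : c' - γ < t - (p:ℝ) * γ := by
      rw [← sub_lt_iff_lt_add, lt_div_iff₀ hγpos] at h2; nlinarith
    refine ⟨p * N, p * K + L, ?_⟩
    have hid : t + ((p * N : ℕ):ℝ) * alph - ((p * K + L : ℤ):ℝ) - c
        = (t - (p:ℝ) * γ) - c' := by
      push_cast
      rw [hγ, hβ]
      ring
    rw [hid, abs_lt]
    constructor <;> linarith
  · -- β > 0
    have hβε : β < ε := by
      have : |β| = β := abs_of_pos hβpos
      linarith [this ▸ hlt]
    set L := ⌈t - c⌉ with hL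
    have hc' : t ≤ c + (L:ℝ) := by
      have := Int.le_ceil (t - c)
      linarith
    set c' := c + (L:ℝ) with hc'def
    set p := ⌈(c' - t) / β⌉₊ with hp
    have hnn : 0 ≤ (c' - t) / β := div_nonneg (by linarith) hβpos.le
    have h1 : (c' - t) / β ≤ (p:ℝ) := Nat.le_ceil _
    have h2 : (p:ℝ) < (c' - t) / β + 1 := Nat.ceil_lt_add_one hnn
    have hlb : c' ≤ t + (p:ℝ) * β := by
      rw [div_le_iff₀ hβpos] at h1; linarith
    have hub : t + (p:ℝ) * β < c' + β := by
      rw [← sub_lt_iff_lt_add, lt_div_iff₀ hβpos] at h2; nlinarith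
    refine ⟨p * N, p * K + L, ?_⟩
    have hid : t + ((p * N : ℕ):ℝ) * alph - ((p * K + L : ℤ):ℝ) - c
        = (t + (p:ℝ) * β) - c' := by
      push_cast
      rw [hβ]
      ring
    rw [hid, abs_lt]
    constructor <;> linarith

lemma logb_two_thirds : Real.logb 3 (2/3) = alph - 1 := by
  rw [Real.logb_div (by norm_num) (by norm_num)]
  simp [alph, Real.logb_self_eq_one]

lemma orbit_form (h : ℝ → ℝ)
    (hh : ∀ x : ℝ, h x = if x < 1 then 2 * x else (2 / 3) * x)
    (x : ℝ) (hx : x ∈ Set.Ico (2/3 : ℝ) 2) (n : ℕ) :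
    h^[n] x ∈ Set.Ico (2/3 : ℝ) 2 ∧
      ∃ k : ℤ, Real.logb 3 (h^[n] x) = Real.logb 3 x + (n:ℝ) * alph - (k:ℝ) := by
  induction n with
  | zero => exact ⟨hx, 0, by simp⟩
  | succ n ih =>
    obtain ⟨⟨hy1, hy2⟩, k, hk⟩ := ih
    rw [Function.iterate_succ_apply']
    set y := h^[n] x with hy
    have hy0 : 0 < y := lt_of_lt_of_le (by norm_num) hy1
    by_cases hycase : y < 1
    · have hhy : h y = 2 * y := by rw [hh]; simp [hycase]
      refine ⟨⟨by rw [hhy]; linarith, by rw [hhy]; linarith⟩, k, ?_⟩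
      rw [hhy, Real.logb_mul (by norm_num) (ne_of_gt hy0), hk]
      push_cast
      show alph + _ = _
      ring
    · push_neg at hycase
      have hhy : h y = 2/3 * y := by rw [hh]; simp [not_lt.mpr hycase]
      refine ⟨⟨?_, ?_⟩, k + 1, ?_⟩
      · rw [hhy]; nlinarith
      · rw [hhy]; linarith
      · rw [hhy, Real.logb_mul (by norm_num) (ne_of_gt hy0), logb_two_thirds, hk]
        push_cast
        ring


/-- Section 2.6: the map `h(x) = 2x` for `x < 1`, `h(x) = (2/3)x` for `x ≥ 1`
maps the interval `[2/3, 2)` into itself, and every forward orbit of a point of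
`[2/3, 2)` is dense in `[2/3, 2)`. -/
theorem orbit_dense_in_Ico
    (h : ℝ → ℝ)
    (hh : ∀ x : ℝ, h x = if x < 1 then 2 * x else (2 / 3) * x) :
    Set.MapsTo h (Set.Ico (2 / 3 : ℝ) 2) (Set.Ico (2 / 3 : ℝ) 2) ∧
    ∀ x ∈ Set.Ico (2 / 3 : ℝ) 2,
      Set.Ico (2 / 3 : ℝ) 2 ⊆ closure {y : ℝ | ∃ n : ℕ, h^[n] x = y} := by
  constructor
  · intro x ⟨hx1, hx2⟩
    rw [hh]
    split_ifs with hc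
    · exact ⟨by linarith, by linarith⟩
    · push_neg at hc
      exact ⟨by nlinarith, by linarith⟩
  · intro x hx y hy
    rw [Metric.mem_closure_iff]
    intro ε hε
    obtain ⟨hy1, hy2⟩ := hy
    -- pick y' slightly above y, strictly inside (y, 2)
    set y' := min ((y + 2)/2) (y + ε/3) with hy'
    have hyy' : y < y' := lt_min (by linarith) (by linarith)
    have hy'2 : y' < 2 := lt_of_le_of_lt (min_le_left _ _) (by linarith)
    have hy'close : y' - y ≤ ε/3 := by
      have := min_le_right ((y + 2)/2) (y + ε/3); linarith
    have hy'pos : 0 < y' := by linarith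
    set t := Real.logb 3 x with ht
    set c := Real.logb 3 y' with hc
    have hcl : alph - 1 < c := by
      rw [← logb_two_thirds]
      exact Real.logb_lt_logb (by norm_num) (by norm_num) (by linarith)
    have hcu : c < alph := by
      have : Real.logb 3 y' < Real.logb 3 2 :=
        Real.logb_lt_logb (by norm_num) hy'pos hy'2
      simpa [alph] using this
    -- continuity of 3 ^ ·
    have hcont : Continuous (fun s : ℝ => (3:ℝ) ^ s) := by
      have hrw : (fun s : ℝ => (3:ℝ) ^ s) = fun s => Real.exp (Real.log 3 * s) := by
        funext s; rw [Real.rpow_def_of_pos (by norm_num)]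
      rw [hrw]
      exact Real.continuous_exp.comp (continuous_const.mul continuous_id)
    obtain ⟨δ₂, hδ₂pos, hδ₂⟩ :=
      Metric.continuousAt_iff.mp hcont.continuousAt (ε/2) (by linarith)
    set δ := min δ₂ (min (c - (alph - 1)) (alph - c)) with hδ
    have hδpos : 0 < δ := lt_min hδ₂pos (lt_min (by linarith) (by linarith))
    obtain ⟨n, J, hnJ⟩ := orbit_close t c hδpos
    obtain ⟨⟨hm1, hm2⟩, k, hk⟩ := orbit_form h hh x hx n
    have hmpos : 0 < h^[n] x := lt_of_lt_of_le (by norm_num) hm1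
    set s := Real.logb 3 (h^[n] x) with hs
    have hsl : alph - 1 ≤ s := by
      rw [← logb_two_thirds]
      exact Real.logb_le_logb_of_le (by norm_num) (by norm_num) hm1
    have hsu : s < alph := by
      have : Real.logb 3 (h^[n] x) < Real.logb 3 2 :=
        Real.logb_lt_logb (by norm_num) hmpos hm2
      simpa [alph] using this
    have habs : |t + (n:ℝ) * alph - (J:ℝ) - c| < δ := hnJ
    have hδle1 : δ ≤ c - (alph - 1) := le_trans (min_le_right _ _) (min_le_left _ _)
    have hδle2 : δ ≤ alph - c := le_trans (min_le_right _ _) (min_le_right _ _)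
    have hδle3 : δ ≤ δ₂ := min_le_left _ _
    rw [abs_lt] at habs
    -- J = k
    have hJk : J = k := by
      have hdiff : ((J:ℝ) - (k:ℝ)) = s - (t + (n:ℝ) * alph - (J:ℝ)) := by
        rw [hk, ht]; ring
      have h1 : |((J - k : ℤ) : ℝ)| < 1 := by
        push_cast
        rw [abs_lt]
        constructor <;> nlinarith [hdiff]
      have h2 : |J - k| < 1 := by exact_mod_cast h1
      rw [abs_lt] at h2
      omega
    have hsc : dist s c < δ₂ := by
      rw [Real.dist_eq, hk, ← hJk]
      rw [abs_lt]
      constructor <;> nlinarith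
    have h3s : (3:ℝ) ^ s = h^[n] x :=
      Real.rpow_logb (by norm_num) (by norm_num) hmpos
    have h3c : (3:ℝ) ^ c = y' :=
      Real.rpow_logb (by norm_num) (by norm_num) hy'pos
    have hclose : dist (h^[n] x) y' < ε/2 := by
      have := hδ₂ hsc
      rwa [h3s, h3c] at this
    refine ⟨h^[n] x, ⟨n, rfl⟩, ?_⟩
    calc dist y (h^[n] x) ≤ dist y y' + dist y' (h^[n] x) := dist_triangle _ _ _
      _ < ε := by
          rw [Real.dist_eq, Real.dist_eq]
          have hA : |y - y'| ≤ ε/3 := by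
            rw [abs_sub_comm, abs_of_nonneg (by linarith : (0:ℝ) ≤ y' - y)]
            exact hy'close
          have hB : |y' - h^[n] x| < ε/2 := by
            rw [abs_sub_comm]
            rwa [Real.dist_eq] at hclose
          linarith
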